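/- For a fixed institution i in a many-to-one stable matching market, the nonempty stable sets of i can be indexed E_i^1, …, E_i^{k_i} so that their least-preferred (cutoff) students are strictly decreasing in i's preference: worst_i(E_i^1) ≻_i worst_i(E_i^2) ≻_i … ≻_i worst_i(E_i^{k_i}). -/

import Mathlib

open Finset

/-- A (many-to-one) matching market: acceptability edges, capacities, and
rank functions encoding strict preferences (lower rank = more preferred). -/
structure Market (S I : Type*) where
  E : Finset (S × I)
  q : I → ℕ
  prefS : S → I → ℕ
  prefI : I → S → ℕ

variable {S I : Type*} [DecidableEq S] [DecidableEq I]

/-- The edges of `M` incident to institution `i`. -/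
def edgesOf (M : Finset (S × I)) (i : I) : Finset (S × I) :=
  M.filter (fun e => e.2 = i)

/-- The set of students assigned to institution `i` under `M`. -/
def assigned (M : Finset (S × I)) (i : I) : Finset S :=
  (edgesOf M i).image Prod.fst

/-- `M` is a matching: it uses acceptable edges, each student is matched at most
once, and each institution `i` is matched to at most `q i` students. -/
def IsMatching (mkt : Market S I) (M : Finset (S × I)) : Prop :=
  M ⊆ mkt.E ∧ (∀ s : S, (M.filter (fun e => e.1 = s)).card ≤ 1) ∧
    ∀ i : I, (edgesOf M i).card ≤ mkt.q i

/-- `(s, i)` blocks `M`: it is an acceptable non-matching pair, `s` strictly prefers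
`i` to her assignment (being unmatched is worst), and `i` has a free seat or a
student it likes strictly less than `s`. -/
def Blocks (mkt : Market S I) (M : Finset (S × I)) (s : S) (i : I) : Prop :=
  (s, i) ∈ mkt.E ∧ (s, i) ∉ M ∧
    (∀ i' : I, (s, i') ∈ M → mkt.prefS s i < mkt.prefS s i') ∧
    ((edgesOf M i).card < mkt.q i ∨ ∃ s' ∈ assigned M i, mkt.prefI i s < mkt.prefI i s')

/-- A stable matching admits no blocking pair. -/
def IsStable (mkt : Market S I) (M : Finset (S × I)) : Prop :=
  IsMatching mkt M ∧ ∀ s i, ¬ Blocks mkt M s i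

/-! ### Auxiliary lemmas -/

lemma mem_assigned {M : Finset (S × I)} {s : S} {i : I} :
    s ∈ assigned M i ↔ (s, i) ∈ M := by
  constructor
  · intro h
    simp only [assigned, edgesOf, Finset.mem_image, Finset.mem_filter] at h
    obtain ⟨⟨a, b⟩, ⟨hm, hb⟩, ha⟩ := h
    simp only at hb ha
    subst hb; subst ha; exact hm
  · intro h
    simp only [assigned, edgesOf, Finset.mem_image, Finset.mem_filter]
    exact ⟨(s, i), ⟨h, rfl⟩, rfl⟩

lemma match_unique {mkt : Market S I} {M : Finset (S × I)} (hM : IsMatching mkt M)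
    {s : S} {i i' : I} (h : (s, i) ∈ M) (h' : (s, i') ∈ M) : i = i' := by
  have hc := hM.2.1 s
  have h1 : (s, i) ∈ M.filter (fun e => e.1 = s) := by
    simp [Finset.mem_filter, h]
  have h2 : (s, i') ∈ M.filter (fun e => e.1 = s) := by
    simp [Finset.mem_filter, h']
  have := Finset.card_le_one.mp hc _ h1 _ h2
  exact congrArg Prod.snd this

lemma card_assigned {M : Finset (S × I)} (i : I) :
    (assigned M i).card = (edgesOf M i).card := by
  apply Finset.card_image_of_injOn
  intro e he e' he' h
  rw [Finset.mem_coe, edgesOf, Finset.mem_filter] at he he'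
  exact Prod.ext h (he.2.trans he'.2.symm)

open Classical in
/-- Students matched in `M'` who strictly prefer their `M'`-assignment to
anything they have in `M`. -/
noncomputable def impSet [Fintype S] (mkt : Market S I) (M M' : Finset (S × I)) : Finset S :=
  Finset.univ.filter
    (fun s => ∃ j, (s, j) ∈ M' ∧ ∀ j', (s, j') ∈ M → mkt.prefS s j < mkt.prefS s j')

lemma mem_impSet [Fintype S] {mkt : Market S I} {M M' : Finset (S × I)} {s : S} :
    s ∈ impSet mkt M M' ↔
      ∃ j, (s, j) ∈ M' ∧ ∀ j', (s, j') ∈ M → mkt.prefS s j < mkt.prefS s j' := by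
  simp [impSet]

/-- If `s` (matched to `j` in `M` but not in `M'`) would be welcomed by `j` under `M'`,
then by stability of `M'`, `s` must strictly prefer her `M'` match. -/
lemma imp_of_witness [Fintype S] {mkt : Market S I} {M M' : Finset (S × I)}
    (hS : ∀ s, Function.Injective (mkt.prefS s))
    (hM : IsStable mkt M) (hM' : IsStable mkt M') {s : S} {j : I}
    (hsj : (s, j) ∈ M) (hnot : (s, j) ∉ M')
    (hw : ∃ s'' ∈ assigned M' j, mkt.prefI j s < mkt.prefI j s'') :
    s ∈ impSet mkt M M' := by
  have hnb := hM'.2 s j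
  have h3 : ¬ (∀ i' : I, (s, i') ∈ M' → mkt.prefS s j < mkt.prefS s i') := by
    intro h
    exact hnb ⟨hM.1.1 hsj, hnot, h, Or.inr hw⟩
  push_neg at h3
  obtain ⟨j'', hj'', hle⟩ := h3
  have hne : j'' ≠ j := by rintro rfl; exact hnot hj''
  have hlt : mkt.prefS s j'' < mkt.prefS s j :=
    lt_of_le_of_ne hle (fun h => hne (hS s h))
  rw [mem_impSet]
  refine ⟨j'', hj'', fun j' hj' => ?_⟩
  have : j = j' := match_unique hM.1 hsj hj'
  subst this
  exact hlt

/-- If some student in `M'(j)` strictly prefers her `M'` match, then `j` is full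
under `M` and prefers all of its `M`-students to her. -/
lemma full_of_imp [Fintype S] {mkt : Market S I} {M M' : Finset (S × I)}
    (hI : ∀ i, Function.Injective (mkt.prefI i))
    (hM : IsStable mkt M) (hM' : IsStable mkt M') {s : S} {j : I}
    (hs : s ∈ impSet mkt M M') (hj : (s, j) ∈ M') :
    (s, j) ∉ M ∧ (edgesOf M j).card = mkt.q j ∧
      ∀ s' ∈ assigned M j, mkt.prefI j s' < mkt.prefI j s := by
  rw [mem_impSet] at hs
  obtain ⟨j₀, hj₀, hpref⟩ := hs
  have hjj : j₀ = j := match_unique hM'.1 hj₀ hj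
  subst hjj
  have hnotM : (s, j₀) ∉ M := fun h => lt_irrefl _ (hpref j₀ h)
  have hnb := hM.2 s j₀
  have h4 : ¬ ((edgesOf M j₀).card < mkt.q j₀ ∨
      ∃ s' ∈ assigned M j₀, mkt.prefI j₀ s < mkt.prefI j₀ s') := by
    intro h
    exact hnb ⟨hM'.1.1 hj₀, hnotM, hpref, h⟩
  push_neg at h4
  refine ⟨hnotM, le_antisymm (hM.1.2.2 j₀) h4.1, fun s' hs' => ?_⟩
  have hle := h4.2 s' hs'
  have hne : s' ≠ s := by
    rintro rfl; exact hnotM (mem_assigned.mp hs')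
  exact lt_of_le_of_ne hle (fun h => hne (hI j₀ h))

/-- Per-institution counting inequality. -/
lemma card_inter_le [Fintype S] {mkt : Market S I} {M M' : Finset (S × I)}
    (hS : ∀ s, Function.Injective (mkt.prefS s))
    (hI : ∀ i, Function.Injective (mkt.prefI i))
    (hM : IsStable mkt M) (hM' : IsStable mkt M') (j : I) :
    (assigned M' j ∩ impSet mkt M M').card ≤ (assigned M j ∩ impSet mkt M M').card := by
  classical
  set X := impSet mkt M M' with hX
  set A := assigned M j with hA
  set B := assigned M' j with hB
  by_cases hne : (B ∩ X).Nonempty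
  · obtain ⟨s, hs⟩ := hne
    rw [Finset.mem_inter] at hs
    have hjM' : (s, j) ∈ M' := mem_assigned.mp hs.1
    obtain ⟨hsnot, hfull, hall⟩ := full_of_imp hI hM hM' hs.2 hjM'
    -- every student matched to j under M but not M' is in X
    have hsub : A \ B ⊆ X := by
      intro s' hs'
      rw [Finset.mem_sdiff] at hs'
      have hs'M : (s', j) ∈ M := mem_assigned.mp hs'.1
      have hs'notM' : (s', j) ∉ M' := fun h => hs'.2 (mem_assigned.mpr h)
      exact imp_of_witness hS hM hM' hs'M hs'notM'
        ⟨s, hs.1, hall s' hs'.1⟩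
    -- cardinalities
    have hBA : B.card ≤ A.card := by
      rw [hA, hB, card_assigned, card_assigned, hfull]
      exact hM'.1.2.2 j
    have e1 : (B \ A).card + (B ∩ A).card = B.card := Finset.card_sdiff_add_card_inter B A
    have e2 : (A \ B).card + (A ∩ B).card = A.card := Finset.card_sdiff_add_card_inter A B
    have e3 : (A ∩ B).card = (B ∩ A).card := by rw [Finset.inter_comm]
    have hdiff : (B \ A).card ≤ (A \ B).card := by omega
    have h1 : B ∩ X ⊆ (A ∩ B ∩ X) ∪ (B \ A) := by
      intro x hx
      rw [Finset.mem_inter] at hx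
      by_cases hxA : x ∈ A
      · exact Finset.mem_union_left _ (by simp [Finset.mem_inter, hx.1, hx.2, hxA])
      · exact Finset.mem_union_right _ (Finset.mem_sdiff.mpr ⟨hx.1, hxA⟩)
    have h2 : (A ∩ B ∩ X) ∪ (A \ B) ⊆ A ∩ X := by
      intro x hx
      rw [Finset.mem_union] at hx
      rcases hx with hx | hx
      · simp only [Finset.mem_inter] at hx ⊢
        exact ⟨hx.1.1, hx.2⟩
      · rw [Finset.mem_inter]
        exact ⟨(Finset.mem_sdiff.mp hx).1, hsub hx⟩
    have hdisj : Disjoint (A ∩ B ∩ X) (A \ B) := by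
      apply Finset.disjoint_left.mpr
      intro x hx hx'
      exact (Finset.mem_sdiff.mp hx').2 (Finset.mem_inter.mp (Finset.mem_inter.mp hx).1).2
    calc (B ∩ X).card ≤ ((A ∩ B ∩ X) ∪ (B \ A)).card := Finset.card_le_card h1
      _ ≤ (A ∩ B ∩ X).card + (B \ A).card := Finset.card_union_le _ _
      _ ≤ (A ∩ B ∩ X).card + (A \ B).card := by omega
      _ = ((A ∩ B ∩ X) ∪ (A \ B)).card := (Finset.card_union_of_disjoint hdisj).symm
      _ ≤ (A ∩ X).card := Finset.card_le_card h2
  · rw [Finset.not_nonempty_iff_eq_empty] at hne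
    simp [hne]

/-- Per-institution counting equality, from global counting. -/
lemma card_inter_eq [Fintype S] [Fintype I] {mkt : Market S I} {M M' : Finset (S × I)}
    (hS : ∀ s, Function.Injective (mkt.prefS s))
    (hI : ∀ i, Function.Injective (mkt.prefI i))
    (hM : IsStable mkt M) (hM' : IsStable mkt M') (i : I) :
    (assigned M' i ∩ impSet mkt M M').card = (assigned M i ∩ impSet mkt M M').card := by
  classical
  set X := impSet mkt M M' with hX
  have hdisj : ∀ (N : Finset (S × I)), IsMatching mkt N →
      ((Finset.univ : Finset I) : Set I).PairwiseDisjoint (fun j => assigned N j ∩ X) := by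
    intro N hN j _ j' _ hjj'
    apply Finset.disjoint_left.mpr
    intro x hx hx'
    rw [Finset.mem_inter] at hx hx'
    exact hjj' (match_unique hN (mem_assigned.mp hx.1) (mem_assigned.mp hx'.1))
  have hcover : (Finset.univ : Finset I).biUnion (fun j => assigned M' j ∩ X) = X := by
    apply Finset.Subset.antisymm
    · intro x hx
      rw [Finset.mem_biUnion] at hx
      obtain ⟨j, _, hj⟩ := hx
      exact (Finset.mem_inter.mp hj).2
    · intro x hx
      have hx' := hx
      rw [hX, mem_impSet] at hx'
      obtain ⟨j, hj, _⟩ := hx'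
      exact Finset.mem_biUnion.mpr ⟨j, Finset.mem_univ j,
        Finset.mem_inter.mpr ⟨mem_assigned.mpr hj, hx⟩⟩
  have hsum' : ∑ j : I, (assigned M' j ∩ X).card = X.card := by
    rw [← Finset.card_biUnion (hdisj M' hM'.1), hcover]
  have hsumle : ∑ j : I, (assigned M j ∩ X).card ≤ X.card := by
    rw [← Finset.card_biUnion (hdisj M hM.1)]
    apply Finset.card_le_card
    intro x hx
    rw [Finset.mem_biUnion] at hx
    obtain ⟨j, _, hj⟩ := hx
    exact (Finset.mem_inter.mp hj).2
  have hpt : ∀ j : I, (assigned M' j ∩ X).card ≤ (assigned M j ∩ X).card :=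
    fun j => card_inter_le hS hI hM hM' j
  by_contra hne
  have hlt : (assigned M' i ∩ X).card < (assigned M i ∩ X).card :=
    lt_of_le_of_ne (hpt i) hne
  have : ∑ j : I, (assigned M' j ∩ X).card < ∑ j : I, (assigned M j ∩ X).card :=
    Finset.sum_lt_sum (fun j _ => hpt j) ⟨i, Finset.mem_univ i, hlt⟩
  omega

/-- The key rigidity lemma: two stable matchings giving `i` nonempty sets with the
same worst rank give `i` the same set. -/
lemma assigned_eq_of_sup_eq [Fintype S] [Fintype I] {mkt : Market S I}
    (hS : ∀ s, Function.Injective (mkt.prefS s))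
    (hI : ∀ i, Function.Injective (mkt.prefI i))
    {M M' : Finset (S × I)} (hM : IsStable mkt M) (hM' : IsStable mkt M') (i : I)
    (hne : (assigned M i).Nonempty) (hne' : (assigned M' i).Nonempty)
    (hsup : (assigned M i).sup (mkt.prefI i) = (assigned M' i).sup (mkt.prefI i)) :
    assigned M i = assigned M' i := by
  classical
  set F := assigned M i with hF
  set F' := assigned M' i with hF'
  -- each student in F \ F' strictly prefers her M' match
  have hDsub : ∀ (N N' : Finset (S × I)), IsStable mkt N → IsStable mkt N' →
      (assigned N' i).Nonempty →
      (assigned N i).sup (mkt.prefI i) ≤ (assigned N' i).sup (mkt.prefI i) →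
      assigned N i \ assigned N' i ⊆ impSet mkt N N' := by
    intro N N' hN hN' hne2 hle s hs
    rw [Finset.mem_sdiff] at hs
    obtain ⟨w', hw'mem, hw'⟩ := Finset.exists_mem_eq_sup _ hne2 (mkt.prefI i)
    have hsle : mkt.prefI i s ≤ mkt.prefI i w' := by
      rw [← hw']
      exact le_trans (Finset.le_sup hs.1) hle
    have hslt : mkt.prefI i s < mkt.prefI i w' := by
      refine lt_of_le_of_ne hsle (fun h => ?_)
      exact hs.2 (hI i h ▸ hw'mem)
    exact imp_of_witness hS hN hN' (mem_assigned.mp hs.1)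
      (fun h => hs.2 (mem_assigned.mpr h)) ⟨w', hw'mem, hslt⟩
  -- show F \ F' = ∅ using the counting equality for (M, M')
  have key : ∀ (N N' : Finset (S × I)), IsStable mkt N → IsStable mkt N' →
      (assigned N i).Nonempty → (assigned N' i).Nonempty →
      (assigned N i).sup (mkt.prefI i) = (assigned N' i).sup (mkt.prefI i) →
      assigned N i \ assigned N' i = ∅ := by
    intro N N' hN hN' hne1 hne2 hsup2
    set G := assigned N i
    set G' := assigned N' i
    set X := impSet mkt N N'
    have hXX' : ∀ s, s ∈ X → s ∈ impSet mkt N' N → False := by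
      intro s h1 h2
      rw [mem_impSet] at h1 h2
      obtain ⟨j, hj, hp⟩ := h1
      obtain ⟨j₂, hj₂, hp₂⟩ := h2
      exact lt_asymm (hp j₂ hj₂) (hp₂ j hj)
    have hD : G \ G' ⊆ X := hDsub N N' hN hN' hne2 (le_of_eq hsup2)
    have hD' : G' \ G ⊆ impSet mkt N' N :=
      hDsub N' N hN' hN hne1 (le_of_eq hsup2.symm)
    have hceq : (G' ∩ X).card = (G ∩ X).card := card_inter_eq hS hI hN hN' i
    have e1 : ((G ∩ X) ∩ G').card + ((G ∩ X) \ G').card = (G ∩ X).card :=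
      (Finset.card_inter_add_card_sdiff _ _)
    have e2 : ((G' ∩ X) ∩ G).card + ((G' ∩ X) \ G).card = (G' ∩ X).card :=
      (Finset.card_inter_add_card_sdiff _ _)
    have e3 : (G ∩ X) ∩ G' = (G' ∩ X) ∩ G := by
      ext x; simp only [Finset.mem_inter]; tauto
    have e4 : (G ∩ X) \ G' = G \ G' := by
      apply Finset.Subset.antisymm
      · intro x hx
        rw [Finset.mem_sdiff] at hx ⊢
        exact ⟨(Finset.mem_inter.mp hx.1).1, hx.2⟩
      · intro x hx
        rw [Finset.mem_sdiff] at hx ⊢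
        exact ⟨Finset.mem_inter.mpr ⟨hx.1, hD (Finset.mem_sdiff.mpr hx)⟩, hx.2⟩
    have e5 : (G' ∩ X) \ G = ∅ := by
      rw [Finset.eq_empty_iff_forall_notMem]
      intro x hx
      rw [Finset.mem_sdiff, Finset.mem_inter] at hx
      exact hXX' x hx.1.2 (hD' (Finset.mem_sdiff.mpr ⟨hx.1.1, hx.2⟩))
    have : (G \ G').card = 0 := by
      rw [e4, e3] at e1
      rw [e5, Finset.card_empty] at e2
      omega
    exact Finset.card_eq_zero.mp this
  have h1 : F \ F' = ∅ := key M M' hM hM' hne hne' hsup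
  have h2 : F' \ F = ∅ := key M' M hM' hM hne' hne hsup.symm
  apply Finset.Subset.antisymm
  · exact Finset.sdiff_eq_empty_iff_subset.mp h1
  · exact Finset.sdiff_eq_empty_iff_subset.mp h2

/-- The nonempty stable sets of an institution i can be enumerated so that their
least-preferred (cutoff) students are strictly decreasing in i's preference
(the rank of the worst student strictly increases along the enumeration). -/
theorem stmt6 [Fintype S] [Fintype I] (mkt : Market S I)
    (hstrictS : ∀ s, Function.Injective (mkt.prefS s))
    (hstrictI : ∀ i, Function.Injective (mkt.prefI i))
    (i : I) :
    ∃ (k : ℕ) (f : Fin k → Finset S),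
      (∀ j, (f j).Nonempty ∧ ∃ M, IsStable mkt M ∧ assigned M i = f j) ∧
      (∀ F : Finset S, F.Nonempty → (∃ M, IsStable mkt M ∧ assigned M i = F) →
        ∃ j, f j = F) ∧
      (∀ j j' : Fin k, j < j' →
        (f j).sup (mkt.prefI i) < (f j').sup (mkt.prefI i)) := by
  classical
  set g : Finset S → ℕ := fun F => F.sup (mkt.prefI i) with hg
  set 𝒮 : Finset (Finset S) :=
    Finset.univ.filter (fun F => F.Nonempty ∧ ∃ M, IsStable mkt M ∧ assigned M i = F)
    with h𝒮
  have hmem𝒮 : ∀ F, F ∈ 𝒮 ↔ F.Nonempty ∧ ∃ M, IsStable mkt M ∧ assigned M i = F := by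
    intro F; simp [h𝒮]
  have hinj : ∀ F ∈ 𝒮, ∀ F' ∈ 𝒮, g F = g F' → F = F' := by
    intro F hF F' hF' hgg
    rw [hmem𝒮] at hF hF'
    obtain ⟨hFne, M, hMs, hMa⟩ := hF
    obtain ⟨hF'ne, M', hM's, hM'a⟩ := hF'
    subst hMa; subst hM'a
    exact assigned_eq_of_sup_eq hstrictS hstrictI hMs hM's i hFne hF'ne hgg
  set T : Finset ℕ := 𝒮.image g with hT
  set mono := T.orderIsoOfFin rfl with hmono
  have hchoice : ∀ j : Fin T.card, ∃ F ∈ 𝒮, g F = (mono j : ℕ) :=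
    fun j => Finset.mem_image.mp (mono j).2
  choose f hfS hfg using hchoice
  refine ⟨T.card, f, ?_, ?_, ?_⟩
  · intro j
    exact (hmem𝒮 (f j)).mp (hfS j)
  · intro F hFne hFM
    have hF𝒮 : F ∈ 𝒮 := (hmem𝒮 F).mpr ⟨hFne, hFM⟩
    have hgT : g F ∈ T := Finset.mem_image_of_mem g hF𝒮
    obtain ⟨j, hj⟩ := mono.surjective ⟨g F, hgT⟩
    refine ⟨j, hinj (f j) (hfS j) F hF𝒮 ?_⟩
    rw [hfg j, hj]
  · intro j j' hjj'
    have h : mono j < mono j' := mono.strictMono hjj'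
    have hlt : (mono j : ℕ) < (mono j' : ℕ) := h
    rw [← hfg j, ← hfg j'] at hlt
    exact hlt
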